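/- Let (G, k) be an instance of Vertex Cover where G is a 2-connected cubic graph, and let G' be obtained from G by subdividing every edge twice. Then G' has a vertex cover of size at most k + |E(G)| if and only if G has a vertex cover of size at most k. -/

import Mathlib

open scoped Classical

/-- The subdivision vertices of `G`: one vertex `w (u,v)` for each ordered adjacent
pair, so each edge `{u,v}` gets the two internal vertices `w (u,v)` and `w (v,u)`. -/
abbrev SubVert {V0 : Type*} (G : SimpleGraph V0) := {p : V0 × V0 // G.Adj p.1 p.2}

/-- The adjacency relation of the graph obtained from `G` by subdividing every edge
twice: each edge `{u,v}` is replaced by the path `u - w(u,v) - w(v,u) - v`. -/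
def subAdj {V0 : Type*} (G : SimpleGraph V0) :
    (V0 ⊕ SubVert G) → (V0 ⊕ SubVert G) → Prop
  | Sum.inl u, Sum.inr q => u = q.1.1
  | Sum.inr q, Sum.inl u => u = q.1.1
  | Sum.inr q, Sum.inr q' => q.1.1 = q'.1.2 ∧ q.1.2 = q'.1.1
  | Sum.inl _, Sum.inl _ => False

/-- The graph obtained from `G` by subdividing every edge twice. -/
def subdivide {V0 : Type*} (G : SimpleGraph V0) : SimpleGraph (V0 ⊕ SubVert G) where
  Adj := subAdj G
  symm := by
    refine ⟨?_⟩
    rintro (u | q) (w | q') h <;> simp only [subAdj] at h ⊢ <;> tauto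
  loopless := by
    refine ⟨?_⟩
    rintro (u | q) h <;> simp only [subAdj] at h
    exact G.loopless.irrefl q.1.1 (h.2 ▸ q.2)

/-- `G` is 2-vertex-connected: more than 2 vertices and deleting any vertex leaves a
connected graph. -/
def TwoVertexConnected {V0 : Type*} [Fintype V0] (G : SimpleGraph V0) : Prop :=
  2 < Fintype.card V0 ∧ ∀ v : V0, (G.induce {u | u ≠ v}).Connected


/-- `S` is a vertex cover of `G`. -/
def IsVC {W : Type*} (G : SimpleGraph W) (S : Finset W) : Prop :=
  ∀ u v : W, G.Adj u v → u ∈ S ∨ v ∈ S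

lemma subdivide_adj_lr {V0 : Type*} (G : SimpleGraph V0) (u : V0) (q : SubVert G) :
    (subdivide G).Adj (Sum.inl u) (Sum.inr q) ↔ u = q.1.1 := Iff.rfl

lemma subdivide_adj_rl {V0 : Type*} (G : SimpleGraph V0) (u : V0) (q : SubVert G) :
    (subdivide G).Adj (Sum.inr q) (Sum.inl u) ↔ u = q.1.1 := Iff.rfl

lemma subdivide_adj_rr {V0 : Type*} (G : SimpleGraph V0) (q q' : SubVert G) :
    (subdivide G).Adj (Sum.inr q) (Sum.inr q') ↔ q.1.1 = q'.1.2 ∧ q.1.2 = q'.1.1 := Iff.rfl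

lemma subdivide_adj_ll {V0 : Type*} (G : SimpleGraph V0) (u v : V0) :
    ¬ (subdivide G).Adj (Sum.inl u) (Sum.inl v) := fun h => h

/-- For a 2-connected cubic graph `G` and its double subdivision `G'`: `G'` has a
vertex cover of size at most `k + |E(G)|` iff `G` has a vertex cover of size at
most `k`. -/
theorem stmt_7 {V0 : Type*} [Fintype V0] (G0 : SimpleGraph V0)
    (hcubic : ∀ v : V0, G0.degree v = 3) (h2c : TwoVertexConnected G0) (k : ℕ) :
    (∃ S' : Finset (V0 ⊕ SubVert G0),
        IsVC (subdivide G0) S' ∧ S'.card ≤ k + G0.edgeFinset.card) ↔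
      (∃ S : Finset V0, IsVC G0 S ∧ S.card ≤ k) := by
  classical
  let ord : V0 → ℕ := fun v => ((Fintype.equivFin V0) v : ℕ)
  have hordinj : Function.Injective ord := fun a b h =>
    (Fintype.equivFin V0).injective (Fin.val_injective h)
  constructor
  · rintro ⟨S', hS', hcard⟩
    set AV : Finset V0 := Finset.univ.filter (fun u => Sum.inl u ∈ S') with hAVdef
    set T : Finset (SubVert G0) := Finset.univ.filter (fun q => Sum.inr q ∈ S') with hTdef
    set P : V0 → Prop := fun u => ∃ v, ∃ h : G0.Adj u v,
      Sum.inr (⟨(u, v), h⟩ : SubVert G0) ∈ S' ∧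
      Sum.inr (⟨(v, u), h.symm⟩ : SubVert G0) ∈ S' ∧ ord u < ord v with hPdef
    set D : Finset V0 := Finset.univ.filter P with hDdef
    have hmemAV : ∀ u, u ∈ AV ↔ Sum.inl u ∈ S' := by
      intro u; rw [hAVdef, Finset.mem_filter]; simp
    have hmemT : ∀ q, q ∈ T ↔ Sum.inr q ∈ S' := by
      intro q; rw [hTdef, Finset.mem_filter]; simp
    have hmemD : ∀ u, u ∈ D ↔ P u := by
      intro u; rw [hDdef, Finset.mem_filter]; simp
    have cover : IsVC G0 (AV ∪ D) := by
      intro u v huv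
      by_cases hu : Sum.inl u ∈ S'
      · exact Or.inl (Finset.mem_union_left _ ((hmemAV u).2 hu))
      by_cases hv : Sum.inl v ∈ S'
      · exact Or.inr (Finset.mem_union_left _ ((hmemAV v).2 hv))
      have h1 : Sum.inr (⟨(u, v), huv⟩ : SubVert G0) ∈ S' := by
        rcases hS' (Sum.inl u) (Sum.inr ⟨(u, v), huv⟩)
          ((subdivide_adj_lr G0 u _).2 rfl) with h | h
        · exact absurd h hu
        · exact h
      have h2 : Sum.inr (⟨(v, u), huv.symm⟩ : SubVert G0) ∈ S' := by
        rcases hS' (Sum.inl v) (Sum.inr ⟨(v, u), huv.symm⟩)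
          ((subdivide_adj_lr G0 v _).2 rfl) with h | h
        · exact absurd h hv
        · exact h
      have hne : ord u ≠ ord v := fun h => G0.ne_of_adj huv (hordinj h)
      rcases lt_or_gt_of_ne hne with hlt | hlt
      · exact Or.inl (Finset.mem_union_right _ ((hmemD u).2 ⟨v, huv, h1, h2, hlt⟩))
      · exact Or.inr (Finset.mem_union_right _ ((hmemD v).2 ⟨u, huv.symm, h2, h1, hlt⟩))
    -- cardinality bookkeeping
    have hAVT : AV.card + T.card ≤ S'.card := by
      have hsub : AV.image Sum.inl ∪ T.image Sum.inr ⊆ S' := by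
        intro x hx
        rcases Finset.mem_union.1 hx with hx | hx
        · obtain ⟨u, hu, rfl⟩ := Finset.mem_image.1 hx
          exact (hmemAV u).1 hu
        · obtain ⟨q, hq, rfl⟩ := Finset.mem_image.1 hx
          exact (hmemT q).1 hq
      have hdisj : Disjoint (AV.image Sum.inl) (T.image Sum.inr) := by
        rw [Finset.disjoint_left]
        rintro x hx hx'
        obtain ⟨u, _, rfl⟩ := Finset.mem_image.1 hx
        obtain ⟨q, _, h⟩ := Finset.mem_image.1 hx'
        exact absurd h (by simp)
      calc AV.card + T.card
          = (AV.image Sum.inl).card + (T.image Sum.inr).card := by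
            rw [Finset.card_image_of_injective _ Sum.inl_injective,
              Finset.card_image_of_injective _ Sum.inr_injective]
        _ = (AV.image Sum.inl ∪ T.image Sum.inr).card :=
            (Finset.card_union_of_disjoint hdisj).symm
        _ ≤ S'.card := Finset.card_le_card hsub
    set g : SubVert G0 → Sym2 V0 := fun q => s(q.1.1, q.1.2) with hgdef
    have hgT : ∀ q ∈ T, g q ∈ G0.edgeFinset := by
      rintro ⟨⟨a, b⟩, hab⟩ _
      rw [hgdef, SimpleGraph.mem_edgeFinset]
      exact hab
    set c : Sym2 V0 → ℕ := fun e => (T.filter (fun q => g q = e)).card with hcdef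
    have hsum : T.card = ∑ e ∈ G0.edgeFinset, c e :=
      Finset.card_eq_sum_card_fiberwise hgT
    have hone : ∀ e ∈ G0.edgeFinset, 1 ≤ c e := by
      intro e
      induction e using Sym2.ind with
      | _ u v =>
        intro he
        have huv : G0.Adj u v := by
          rwa [SimpleGraph.mem_edgeFinset, SimpleGraph.mem_edgeSet] at he
        have hmid := hS' (Sum.inr ⟨(u, v), huv⟩) (Sum.inr ⟨(v, u), huv.symm⟩)
          ((subdivide_adj_rr G0 _ _).2 ⟨rfl, rfl⟩)
        have hq : ∃ q ∈ T, g q = s(u, v) := by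
          rcases hmid with h | h
          · exact ⟨⟨(u, v), huv⟩, (hmemT _).2 h, rfl⟩
          · exact ⟨⟨(v, u), huv.symm⟩, (hmemT _).2 h, Sym2.eq_swap⟩
        obtain ⟨q, hqT, hgq⟩ := hq
        have : q ∈ T.filter (fun q => g q = s(u, v)) := Finset.mem_filter.2 ⟨hqT, hgq⟩
        exact Finset.card_pos.2 ⟨q, this⟩
    set Dd : Finset (Sym2 V0) := G0.edgeFinset.filter (fun e => 2 ≤ c e) with hDddef
    have hsum2 : G0.edgeFinset.card + Dd.card ≤ T.card := by
      rw [hsum]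
      have heq : ∑ e ∈ G0.edgeFinset, (1 + if 2 ≤ c e then 1 else 0)
          = G0.edgeFinset.card + Dd.card := by
        rw [Finset.sum_add_distrib, Finset.sum_const, smul_eq_mul, mul_one,
          hDddef, Finset.card_filter]
      rw [← heq]
      apply Finset.sum_le_sum
      intro e he
      have := hone e he
      split_ifs with h <;> omega
    have hDDd : D.card ≤ Dd.card := by
      set F : V0 → Sym2 V0 := fun u => if h : P u then s(u, h.choose) else s(u, u) with hFdef
      apply Finset.card_le_card_of_injOn F
      · intro u hu
        have hPu : P u := (hmemD u).1 hu
        obtain ⟨hadj, hq1, hq2, hlt⟩ := hPu.choose_spec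
        have hFu : F u = s(u, hPu.choose) := by rw [hFdef]; exact dif_pos hPu
        rw [hFu, hDddef, Finset.mem_coe, Finset.mem_filter]
        refine ⟨by rw [SimpleGraph.mem_edgeFinset]; exact hadj, ?_⟩
        have hne : (⟨(u, hPu.choose), hadj⟩ : SubVert G0)
            ≠ (⟨(hPu.choose, u), hadj.symm⟩ : SubVert G0) := by
          intro h
          have := congrArg (fun q : SubVert G0 => q.1.1) h
          exact G0.ne_of_adj hadj this
        have hm1 : (⟨(u, hPu.choose), hadj⟩ : SubVert G0)
            ∈ T.filter (fun q => g q = s(u, hPu.choose)) :=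
          Finset.mem_filter.2 ⟨(hmemT _).2 hq1, rfl⟩
        have hm2 : (⟨(hPu.choose, u), hadj.symm⟩ : SubVert G0)
            ∈ T.filter (fun q => g q = s(u, hPu.choose)) :=
          Finset.mem_filter.2 ⟨(hmemT _).2 hq2, Sym2.eq_swap⟩
        exact Finset.one_lt_card.2 ⟨_, hm1, _, hm2, hne⟩
      · intro u hu u' hu' heq
        have hPu : P u := (hmemD u).1 hu
        have hPu' : P u' := (hmemD u').1 hu'
        obtain ⟨hadj, _, _, hlt⟩ := hPu.choose_spec
        obtain ⟨hadj', _, _, hlt'⟩ := hPu'.choose_spec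
        rw [hFdef] at heq
        simp only at heq
        rw [dif_pos hPu, dif_pos hPu', Sym2.eq_iff] at heq
        rcases heq with ⟨h1, h2⟩ | ⟨h1, h2⟩
        · exact h1
        · exfalso
          rw [h2] at hlt
          rw [← h1] at hlt'
          omega
    refine ⟨AV ∪ D, cover, ?_⟩
    have h1 : (AV ∪ D).card ≤ AV.card + D.card := Finset.card_union_le _ _
    omega
  · rintro ⟨S, hS, hcard⟩
    set chosen : Finset (SubVert G0) := Finset.univ.filter
      (fun q => q.1.2 ∈ S ∧ (q.1.1 ∉ S ∨ ord q.1.1 < ord q.1.2)) with hchdef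
    have hmemch : ∀ q : SubVert G0,
        q ∈ chosen ↔ q.1.2 ∈ S ∧ (q.1.1 ∉ S ∨ ord q.1.1 < ord q.1.2) := by
      intro q; rw [hchdef, Finset.mem_filter]; simp
    refine ⟨S.image Sum.inl ∪ chosen.image Sum.inr, ?_, ?_⟩
    · rintro (u | q) (v | q') hadj
      · exact absurd hadj (subdivide_adj_ll G0 u v)
      · -- inl u, inr q'
        have h : u = q'.1.1 := (subdivide_adj_lr G0 u q').1 hadj
        subst h
        by_cases hu : q'.1.1 ∈ S
        · exact Or.inl (Finset.mem_union_left _ (Finset.mem_image_of_mem _ hu))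
        · have hv : q'.1.2 ∈ S := by
            rcases hS q'.1.1 q'.1.2 q'.2 with h | h
            · exact absurd h hu
            · exact h
          exact Or.inr (Finset.mem_union_right _
            (Finset.mem_image_of_mem _ ((hmemch q').2 ⟨hv, Or.inl hu⟩)))
      · -- inr q, inl v
        have h : v = q.1.1 := (subdivide_adj_rl G0 v q).1 hadj
        subst h
        by_cases hu : q.1.1 ∈ S
        · exact Or.inr (Finset.mem_union_left _ (Finset.mem_image_of_mem _ hu))
        · have hv : q.1.2 ∈ S := by
            rcases hS q.1.1 q.1.2 q.2 with h | h
            · exact absurd h hu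
            · exact h
          exact Or.inl (Finset.mem_union_right _
            (Finset.mem_image_of_mem _ ((hmemch q).2 ⟨hv, Or.inl hu⟩)))
      · -- inr q, inr q'
        obtain ⟨h1, h2⟩ := (subdivide_adj_rr G0 q q').1 hadj
        have hne : ord q.1.1 ≠ ord q.1.2 := fun h => G0.ne_of_adj q.2 (hordinj h)
        have hq'mem : q'.1.2 ∈ S ↔ q.1.1 ∈ S := by rw [← h1]
        have hq'mem1 : q'.1.1 ∈ S ↔ q.1.2 ∈ S := by rw [← h2]
        rcases hS q.1.1 q.1.2 q.2 with hu | hv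
        · by_cases hv : q.1.2 ∈ S
          · rcases lt_or_gt_of_ne hne with hlt | hlt
            · exact Or.inl (Finset.mem_union_right _
                (Finset.mem_image_of_mem _ ((hmemch q).2 ⟨hv, Or.inr hlt⟩)))
            · refine Or.inr (Finset.mem_union_right _
                (Finset.mem_image_of_mem _ ((hmemch q').2 ⟨hq'mem.2 hu, ?_⟩)))
              right; rw [← h1, ← h2]; exact hlt
          · refine Or.inr (Finset.mem_union_right _
              (Finset.mem_image_of_mem _ ((hmemch q').2 ⟨hq'mem.2 hu, ?_⟩)))
            left; rw [hq'mem1]; exact hv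
        · by_cases hu : q.1.1 ∈ S
          · rcases lt_or_gt_of_ne hne with hlt | hlt
            · exact Or.inl (Finset.mem_union_right _
                (Finset.mem_image_of_mem _ ((hmemch q).2 ⟨hv, Or.inr hlt⟩)))
            · refine Or.inr (Finset.mem_union_right _
                (Finset.mem_image_of_mem _ ((hmemch q').2 ⟨hq'mem.2 hu, ?_⟩)))
              right; rw [← h1, ← h2]; exact hlt
          · exact Or.inl (Finset.mem_union_right _
              (Finset.mem_image_of_mem _ ((hmemch q).2 ⟨hv, Or.inl hu⟩)))
    · have h1 : (S.image Sum.inl ∪ chosen.image Sum.inr).card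
          ≤ S.card + chosen.card := by
        refine (Finset.card_union_le _ _).trans ?_
        rw [Finset.card_image_of_injective _ Sum.inl_injective,
          Finset.card_image_of_injective _ Sum.inr_injective]
      have h2 : chosen.card ≤ G0.edgeFinset.card := by
        apply Finset.card_le_card_of_injOn (fun q : SubVert G0 => s(q.1.1, q.1.2))
        · rintro ⟨⟨a, b⟩, hab⟩ _
          rw [Finset.mem_coe, SimpleGraph.mem_edgeFinset]
          exact hab
        · rintro ⟨⟨a, b⟩, hab⟩ hq ⟨⟨a', b'⟩, hab'⟩ hq' heq
          replace hq := (hmemch _).1 (Finset.mem_coe.1 hq)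
          replace hq' := (hmemch _).1 (Finset.mem_coe.1 hq')
          simp only at hq hq' heq
          rw [Sym2.eq_iff] at heq
          rcases heq with ⟨rfl, rfl⟩ | ⟨rfl, rfl⟩
          · rfl
          · exfalso
            obtain ⟨hbS, hcond⟩ := hq
            obtain ⟨hbS', hcond'⟩ := hq'
            rcases hcond with h | h
            · exact h hbS'
            · rcases hcond' with h' | h'
              · exact h' hbS
              · omega
      omega
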